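/- Fix an s×t matrix A over an alphabet Γ. There exist constants c, k > 0 (depending only on A) such that for every real ε ∈ (0,1] and every integer n ≥ c·ε^{-k}: if an s×n matrix T over Γ contains at least ε·n pairwise-disjoint copies of A (each copy uses all s rows of T and a strictly increasing choice of t of its columns, and copies are pairwise disjoint exactly when their column sets are pairwise disjoint), then the total number of copies of A in T is at least (ε/(2t))^t · n^t. -/

import Mathlib

/-- `(r, c)` is a copy of the `s × t` matrix `A` inside the `m × n` matrix `M`. -/
def IsCopy {Γ : Type*} {s t m n : ℕ} (A : Fin s → Fin t → Γ) (M : Fin m → Fin n → Γ)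
    (r : Fin s → Fin m) (c : Fin t → Fin n) : Prop :=
  StrictMono r ∧ StrictMono c ∧ ∀ i j, M (r i) (c j) = A i j

/-- The number of copies of `A` in `M`. -/
noncomputable def copyCount {Γ : Type*} {s t m n : ℕ} (A : Fin s → Fin t → Γ)
    (M : Fin m → Fin n → Γ) : ℕ :=
  Set.ncard {p : (Fin s → Fin m) × (Fin t → Fin n) | IsCopy A M p.1 p.2}

lemma exists_chain {n t : ℕ} (j : ℕ) (hjt : j ≤ t) (S : Finset (Fin t → Fin n))
    (hcard : S.card = j)
    (hmono : ∀ d ∈ S, StrictMono d)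
    (hdisj : (S : Set (Fin t → Fin n)).Pairwise fun p q => Disjoint (Set.range p) (Set.range q)) :
    ∃ f : Fin j → (Fin t → Fin n), Function.Injective f ∧ (∀ i, f i ∈ S) ∧
      ∀ a b : Fin j, a < b → f a (a.castLE hjt) < f b (b.castLE hjt) := by
  induction j generalizing S with
  | zero => exact ⟨Fin.elim0, fun a => a.elim0, fun a => a.elim0, fun a => a.elim0⟩
  | succ j ih =>
    have hne : S.Nonempty := by rw [← Finset.card_pos, hcard]; omega
    obtain ⟨d, hdS, hdmax⟩ := S.exists_max_image (fun e => e ⟨j, hjt⟩) hne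
    set S' := S.erase d with hS'
    have hsub : S' ⊆ S := Finset.erase_subset _ _
    obtain ⟨f', hf'inj, hf'mem, hf'chain⟩ := ih (by omega) S'
      (by rw [hS', Finset.card_erase_of_mem hdS, hcard]; rfl)
      (fun e he => hmono e (hsub he))
      (hdisj.mono (by exact_mod_cast hsub))
    refine ⟨Fin.snoc f' d, ?_, ?_, ?_⟩
    · intro a b hab
      rcases eq_or_ne a (Fin.last j) with rfl | ha
      · rcases eq_or_ne b (Fin.last j) with rfl | hb
        · rfl
        · obtain ⟨b0, rfl⟩ := Fin.exists_castSucc_eq.mpr hb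
          rw [Fin.snoc_last, Fin.snoc_castSucc] at hab
          exact absurd hab.symm (Finset.ne_of_mem_erase (show f' b0 ∈ S.erase d from hf'mem b0))
      · obtain ⟨a0, rfl⟩ := Fin.exists_castSucc_eq.mpr ha
        rcases eq_or_ne b (Fin.last j) with rfl | hb
        · rw [Fin.snoc_last, Fin.snoc_castSucc] at hab
          exact absurd hab (Finset.ne_of_mem_erase (show f' a0 ∈ S.erase d from hf'mem a0))
        · obtain ⟨b0, rfl⟩ := Fin.exists_castSucc_eq.mpr hb
          rw [Fin.snoc_castSucc, Fin.snoc_castSucc] at hab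
          rw [hf'inj hab]
    · intro i
      rcases eq_or_ne i (Fin.last j) with rfl | hi
      · rw [Fin.snoc_last]; exact hdS
      · obtain ⟨i0, rfl⟩ := Fin.exists_castSucc_eq.mpr hi
        rw [Fin.snoc_castSucc]; exact hsub (hf'mem i0)
    · intro a b hab
      rcases eq_or_ne b (Fin.last j) with rfl | hb
      · have ha : a ≠ Fin.last j := hab.ne
        obtain ⟨a0, rfl⟩ := Fin.exists_castSucc_eq.mpr ha
        rw [Fin.snoc_castSucc, Fin.snoc_last]
        have hmem : f' a0 ∈ S := hsub (hf'mem a0)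
        have h1 : f' a0 ((a0.castSucc).castLE hjt) < f' a0 ⟨j, hjt⟩ := by
          apply hmono _ hmem
          simp [Fin.lt_def]
        have h2 : f' a0 ⟨j, hjt⟩ ≤ d ⟨j, hjt⟩ := hdmax _ hmem
        have : ((Fin.last j).castLE hjt) = (⟨j, hjt⟩ : Fin t) := rfl
        rw [this]
        exact lt_of_lt_of_le h1 h2
      · obtain ⟨b0, rfl⟩ := Fin.exists_castSucc_eq.mpr hb
        have ha : a ≠ Fin.last j := ne_of_lt (lt_trans hab (Fin.castSucc_lt_last b0))
        obtain ⟨a0, rfl⟩ := Fin.exists_castSucc_eq.mpr ha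
        rw [Fin.snoc_castSucc, Fin.snoc_castSucc]
        have hab0 : a0 < b0 := by rwa [Fin.castSucc_lt_castSucc_iff] at hab
        have e1 : (a0.castSucc).castLE hjt = a0.castLE (Nat.le_of_succ_le hjt) := rfl
        have e2 : (b0.castSucc).castLE hjt = b0.castLE (Nat.le_of_succ_le hjt) := rfl
        rw [e1, e2]
        exact hf'chain a0 b0 hab0

lemma pow_le_choose_aux {m t : ℕ} (hm : 2 * t ≤ m) : m ^ t ≤ (2 * t) ^ t * m.choose t := by
  have h1 : m ^ t ≤ ∏ i ∈ Finset.range t, (2 * (m - i)) := by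
    calc m ^ t = ∏ _i ∈ Finset.range t, m := by
          rw [Finset.prod_const, Finset.card_range]
      _ ≤ ∏ i ∈ Finset.range t, (2 * (m - i)) := by
          apply Finset.prod_le_prod'
          intro i hi
          rw [Finset.mem_range] at hi
          omega
  have h2 : ∏ i ∈ Finset.range t, (2 * (m - i)) = 2 ^ t * Nat.descFactorial m t := by
    rw [Finset.prod_mul_distrib, Finset.prod_const, Finset.card_range,
      Nat.descFactorial_eq_prod_range]
  have h3 : Nat.descFactorial m t = t.factorial * m.choose t :=
    Nat.descFactorial_eq_factorial_mul_choose m t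
  calc m ^ t ≤ 2 ^ t * (t.factorial * m.choose t) := by rw [← h3, ← h2]; exact h1
    _ ≤ 2 ^ t * (t ^ t * m.choose t) := by
        exact Nat.mul_le_mul_left _ (Nat.mul_le_mul_right _ (Nat.factorial_le_pow t))
    _ = (2 * t) ^ t * m.choose t := by rw [mul_pow, mul_assoc]

theorem strip_removal {Γ : Type*} {s t : ℕ} (A : Fin s → Fin t → Γ) :
    ∃ c : ℝ, ∃ k : ℕ, 0 < c ∧ 0 < k ∧
      ∀ ε : ℝ, 0 < ε → ε ≤ 1 → ∀ n : ℕ, c / ε ^ k ≤ (n : ℝ) →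
        ∀ T : Fin s → Fin n → Γ,
          (∃ D : Finset (Fin t → Fin n),
            (∀ cm ∈ D, StrictMono cm ∧ ∀ i j, T i (cm j) = A i j) ∧
            ((D : Set (Fin t → Fin n)).Pairwise
              fun p q => Disjoint (Set.range p) (Set.range q)) ∧
            ε * (n : ℝ) ≤ (D.card : ℝ)) →
          (ε / (2 * (t : ℝ))) ^ t * (n : ℝ) ^ t ≤ (copyCount A T : ℝ) := by
  classical
  refine ⟨2 * t + 2, 1, by positivity, one_pos, ?_⟩
  rintro ε hε hε1 n hn T ⟨D, hD1, hD2, hD3⟩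
  rw [pow_one] at hn
  have hεn : (2 * (t : ℝ) + 2) ≤ ε * n := by
    calc (2 * (t : ℝ) + 2) = (2 * (t : ℝ) + 2) / ε * ε := by field_simp
      _ ≤ (n : ℝ) * ε := mul_le_mul_of_nonneg_right hn hε.le
      _ = ε * n := mul_comm _ _
  set m := D.card with hm
  have hmR : (2 * (t : ℝ) + 2) ≤ (m : ℝ) := hεn.trans hD3
  have hmN : 2 * t + 2 ≤ m := by exact_mod_cast hmR
  -- Step A: build injection from t-subsets of D into copies
  have key : ∀ S ∈ D.powersetCard t, ∃ f : Fin t → (Fin t → Fin n),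
      Function.Injective f ∧ (∀ i, f i ∈ S) ∧ StrictMono (fun j : Fin t => f j j) := by
    intro S hS
    rw [Finset.mem_powersetCard] at hS
    obtain ⟨hSD, hScard⟩ := hS
    obtain ⟨f, hinj, hmem, hchain⟩ := exists_chain t le_rfl S hScard
      (fun d hd => (hD1 d (hSD hd)).1)
      (hD2.mono (by exact_mod_cast hSD))
    exact ⟨f, hinj, hmem, fun a b hab => hchain a b hab⟩
  have hnpos : 0 < n := by
    have h0 : (0:ℝ) < (2 * (t : ℝ) + 2) / ε := by positivity
    have h1 := h0.trans_le hn
    exact_mod_cast h1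
  have : Inhabited (Fin n) := ⟨⟨0, hnpos⟩⟩
  choose! F hFinj hFmem hFmono using key
  have himg : ∀ S ∈ D.powersetCard t,
      (((id : Fin s → Fin s), fun j : Fin t => F S j j) : (Fin s → Fin s) × (Fin t → Fin n))
        ∈ {p : (Fin s → Fin s) × (Fin t → Fin n) | IsCopy A T p.1 p.2} := by
    intro S hS
    have hSD : S ⊆ D := (Finset.mem_powersetCard.mp hS).1
    refine ⟨strictMono_id, hFmono S hS, ?_⟩
    intro i j
    exact (hD1 (F S j) (hSD (hFmem S hS j))).2 i j
  have hSeq : ∀ S ∈ D.powersetCard t, Finset.image (F S) Finset.univ = S := by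
    intro S hS
    apply Finset.eq_of_subset_of_card_le
    · intro x hx
      rw [Finset.mem_image] at hx
      obtain ⟨i, _, rfl⟩ := hx
      exact hFmem S hS i
    · rw [Finset.card_image_of_injective _ (hFinj S hS), Finset.card_univ, Fintype.card_fin]
      exact (Finset.mem_powersetCard.mp hS).2.le
  have hinjOn : Set.InjOn
      (fun S => (((id : Fin s → Fin s), fun j : Fin t => F S j j) :
        (Fin s → Fin s) × (Fin t → Fin n)))
      (↑(D.powersetCard t) : Set (Finset (Fin t → Fin n))) := by
    intro S hS S' hS' heq
    have hS'' : S ∈ D.powersetCard t := by exact_mod_cast hS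
    have hS''' : S' ∈ D.powersetCard t := by exact_mod_cast hS'
    have h2 : ∀ j : Fin t, F S j j = F S' j j := fun j =>
      congrFun (congrArg Prod.snd heq) j
    have hFeq : ∀ j : Fin t, F S j = F S' j := by
      intro j
      by_contra hne
      have hd1 : F S j ∈ D := (Finset.mem_powersetCard.mp hS'').1 (hFmem S hS'' j)
      have hd2 : F S' j ∈ D := (Finset.mem_powersetCard.mp hS''').1 (hFmem S' hS''' j)
      have hdisj := hD2 (by exact_mod_cast hd1) (by exact_mod_cast hd2) hne
      exact (Set.disjoint_left.mp hdisj ⟨j, rfl⟩) ⟨j, (h2 j).symm⟩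
    calc S = Finset.image (F S) Finset.univ := (hSeq S hS'').symm
      _ = Finset.image (F S') Finset.univ := by rw [funext hFeq]
      _ = S' := hSeq S' hS'''
  have hcount : (D.powersetCard t).card ≤ copyCount A T := by
    rw [copyCount]
    calc (D.powersetCard t).card
        = (↑(D.powersetCard t) : Set (Finset (Fin t → Fin n))).ncard :=
          (Set.ncard_coe_finset _).symm
      _ = ((fun S => (((id : Fin s → Fin s), fun j : Fin t => F S j j) :
            (Fin s → Fin s) × (Fin t → Fin n))) ''
            (↑(D.powersetCard t) : Set (Finset (Fin t → Fin n)))).ncard :=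
          (Set.ncard_image_of_injOn hinjOn).symm
      _ ≤ _ := Set.ncard_le_ncard
          (by rintro p ⟨S, hS, rfl⟩; exact himg S (by exact_mod_cast hS))
          (Set.toFinite _)
  rw [Finset.card_powersetCard] at hcount
  -- Step B: numeric bound
  have hgoal : (ε / (2 * (t : ℝ))) ^ t * (n : ℝ) ^ t ≤ (m.choose t : ℝ) := by
    rcases Nat.eq_zero_or_pos t with rfl | ht
    · simp
    · have h2t : (0 : ℝ) < 2 * (t : ℝ) := by positivity
      have hnat : m ^ t ≤ (2 * t) ^ t * m.choose t := pow_le_choose_aux (by omega)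
      have hR : (m : ℝ) ^ t ≤ (2 * (t : ℝ)) ^ t * (m.choose t : ℝ) := by exact_mod_cast hnat
      have hn0 : (0 : ℝ) ≤ (n : ℝ) := Nat.cast_nonneg n
      calc (ε / (2 * (t : ℝ))) ^ t * (n : ℝ) ^ t = (ε * n / (2 * (t : ℝ))) ^ t := by
            rw [← mul_pow, div_mul_eq_mul_div]
        _ ≤ ((m : ℝ) / (2 * (t : ℝ))) ^ t := by
            gcongr
        _ ≤ (m.choose t : ℝ) := by
            rw [div_pow, div_le_iff₀ (by positivity)]
            calc (m : ℝ) ^ t ≤ (2 * (t : ℝ)) ^ t * (m.choose t : ℝ) := hR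
              _ = (m.choose t : ℝ) * (2 * (t : ℝ)) ^ t := mul_comm _ _
  calc (ε / (2 * (t : ℝ))) ^ t * (n : ℝ) ^ t ≤ (m.choose t : ℝ) := hgoal
    _ ≤ (copyCount A T : ℝ) := Nat.cast_le.mpr hcount
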